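/- Let q be a prime power with q ≥ hk + 1, h ≥ 2. Suppose B*(x, y) = Σ_{i,j=1}^{hk} γ_{i,j} x_i y_j is a nonzero bilinear form on F_{q^h}^{hk} such that B*(v_α, v_{α^q}) = 0 for every α ∈ F_{q^h} generating F_{q^h} over F_q, where v_β = (1, β, β², …, β^{hk−1}). Then the polynomial f(Z) = Σ_{i,j} γ_{i,j} Z^{i−1} Z^{q(j−1)} = Σ_{i,j} γ_{i,j} Z^{(i−1)+q(j−1)} is a nonzero polynomial of degree at most (hk−1)(q+1) with at least q^h − q^{h-1} distinct roots; in particular (hk−1)(q+1) ≥ q^h − q^{h-1} must hold, which fails for q ≥ hk+1 and h ≥ 2. Hence no such nonzero bilinear form exists. -/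

import Mathlib

open Polynomial Finset

private lemma numeric_ineq (q n h : ℕ) (hq3 : 3 ≤ q) (hh : 2 ≤ h) (hn : n + 1 ≤ q) (hn1 : 1 ≤ n) :
    (n - 1) + q * (n - 1) + (∑ d ∈ Finset.range (h-1), q ^ (d+1)) < q ^ h := by
  have key : ∀ m : ℕ, (∑ d ∈ Finset.range ((m:ℕ)), (q:ℤ) ^ d) * (q - 1) = q ^ m - 1 :=
    fun m => geom_sum_mul (q : ℤ) m
  set S : ℤ := ∑ d ∈ Finset.range h, (q:ℤ) ^ d with hS
  have hgeom : S * (q - 1) = (q:ℤ) ^ h - 1 := key h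
  have hSub : (∑ d ∈ Finset.range (h-1), (q:ℤ) ^ (d+1)) + 1 = S := by
    rw [hS]
    have : h = (h-1) + 1 := by omega
    rw [this, Finset.sum_range_succ']
    simp
  have hSge : 1 + (q:ℤ) ≤ S := by
    rw [hS]
    calc (1:ℤ) + q = ∑ d ∈ Finset.range 2, (q:ℤ)^d := by simp [Finset.sum_range_succ]
    _ ≤ _ := Finset.sum_le_sum_of_subset_of_nonneg (Finset.range_subset_range.2 hh)
        (fun i _ _ => by positivity)
  zify
  have h1 : ((n - 1 : ℕ) : ℤ) = (n : ℤ) - 1 := by omega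
  rw [h1]
  rw [← hSub] at hgeom hSge
  have hqn : (n:ℤ) + 1 ≤ q := by exact_mod_cast hn
  nlinarith [hSge, hgeom, hqn]


/-- for q ≥ hk+1 and h ≥ 2, no nonzero bilinear form on F_{q^h}^{hk}
vanishes on all pairs (v_α, v_{α^q}) with α a generator of F_{q^h} over F_q. -/
theorem no_bilinear_form_vanishing_on_conjugate_pairs
    (Fq K : Type) [Field Fq] [Fintype Fq] [Field K] [Fintype K] [Algebra Fq K]
    (h k : ℕ) (hh : 2 ≤ h) (hk0 : 0 < k)
    (hrank : Module.finrank Fq K = h)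
    (hq : h * k + 1 ≤ Fintype.card Fq)
    (B : (Fin (h * k) → K) →ₗ[K] (Fin (h * k) → K) →ₗ[K] K)
    (hB : ∀ α : K, IntermediateField.adjoin Fq {α} = ⊤ →
      B (fun i => α ^ (i : ℕ)) (fun i => (α ^ (Fintype.card Fq)) ^ (i : ℕ)) = 0) :
    B = 0 := by
  classical
  set q := Fintype.card Fq with hqdef
  have hn2 : 2 ≤ h * k := le_trans hh (Nat.le_mul_of_pos_right h hk0)
  have hn1 : 1 ≤ h * k := by omega
  have hq3 : 3 ≤ q := by omega
  have hqpos : 0 < q := by omega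
  -- the coefficients
  set γ : Fin (h*k) → Fin (h*k) → K := fun i j => B (Pi.single i 1) (Pi.single j 1) with hγdef
  -- expansion of linear functionals on the standard basis
  have key1 : ∀ (φ : (Fin (h*k) → K) →ₗ[K] K) (x : Fin (h*k) → K),
      φ x = ∑ i, x i * φ (Pi.single i 1) := by
    intro φ x
    have hs : ∀ (i : Fin (h*k)), Pi.single i (x i) = x i • (Pi.single i 1 : Fin (h*k) → K) := by
      intro i
      ext j
      by_cases hj : j = i <;> simp [Pi.single_apply, hj]
    conv_lhs => rw [← Finset.univ_sum_single x]
    rw [map_sum]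
    refine Finset.sum_congr rfl fun i _ => ?_
    rw [hs i, map_smul, smul_eq_mul]
  have hexp : ∀ x y : Fin (h*k) → K, B x y = ∑ i, ∑ j, x i * (y j * γ i j) := by
    intro x y
    have h1 : B x y = ∑ i, x i * B (Pi.single i 1) y := key1 (B.flip y) x
    rw [h1]
    refine Finset.sum_congr rfl fun i _ => ?_
    rw [key1 (B (Pi.single i 1)) y, Finset.mul_sum]
  -- it suffices to show all coefficients vanish
  suffices hγ0 : ∀ i j, γ i j = 0 by
    apply LinearMap.ext; intro x; apply LinearMap.ext; intro y
    have hB0 : B x y = 0 := by rw [hexp]; simp [hγ0]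
    simpa using hB0
  -- the polynomial f
  set f : K[X] := ∑ i : Fin (h*k), ∑ j : Fin (h*k),
    monomial ((i:ℕ) + q * (j:ℕ)) (γ i j) with hfdef
  -- the auxiliary polynomial g
  set g : K[X] := ∏ d ∈ Finset.range (h-1), (X ^ (q ^ (d+1)) - X) with hgdef
  have hcoeff : ∀ i j : Fin (h*k), f.coeff ((i:ℕ) + q * (j:ℕ)) = γ i j := by
    intro i j
    have hinj : ∀ i' j' : Fin (h*k),
        (i':ℕ) + q * (j':ℕ) = (i:ℕ) + q * (j:ℕ) → i' = i ∧ j' = j := by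
      intro i' j' hEq
      have hi' : (i':ℕ) < q := lt_of_lt_of_le i'.isLt (by omega)
      have hi : (i:ℕ) < q := lt_of_lt_of_le i.isLt (by omega)
      have h1 : (i':ℕ) = i := by
        have := congrArg (· % q) hEq
        simpa [Nat.add_mul_mod_self_left, Nat.mod_eq_of_lt hi', Nat.mod_eq_of_lt hi] using this
      have h2 : (j':ℕ) = j := by
        have hqq : q * (j':ℕ) = q * (j:ℕ) := by omega
        exact Nat.eq_of_mul_eq_mul_left hqpos hqq
      exact ⟨Fin.ext h1, Fin.ext h2⟩
    rw [hfdef, finset_sum_coeff, Finset.sum_eq_single i]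
    · rw [finset_sum_coeff, Finset.sum_eq_single j]
      · simp [coeff_monomial]
      · intro j' _ hj'
        rw [coeff_monomial, if_neg]
        intro hc
        exact hj' (hinj i j' hc).2
      · simp
    · intro i' _ hi'
      rw [finset_sum_coeff]
      apply Finset.sum_eq_zero
      intro j' _
      rw [coeff_monomial, if_neg]
      intro hc
      exact hi' (hinj i' j' hc).1
    · simp
  -- every element of K is a root of f * g
  have hFD : FiniteDimensional Fq K := Module.finite_iff_finite.2 inferInstance
  have hcardK : Fintype.card K = q ^ h := by rw [Module.card_eq_pow_finrank (K := Fq), hrank]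
  have hroot : ∀ α : K, (f * g).eval α = 0 := by
    intro α
    rw [eval_mul]
    by_cases hgen : IntermediateField.adjoin Fq {α} = ⊤
    · have hf0 : f.eval α = 0 := by
        have hz := hB α hgen
        rw [hexp] at hz
        rw [hfdef, eval_finset_sum, ← hz]
        refine Finset.sum_congr rfl fun i _ => ?_
        rw [eval_finset_sum]
        refine Finset.sum_congr rfl fun j _ => ?_
        rw [eval_monomial, pow_add, pow_mul]
        ring
      rw [hf0, zero_mul]
    · -- α lies in a proper subfield
      set L := IntermediateField.adjoin Fq {α} with hLdef
      have hmem : α ∈ L := IntermediateField.mem_adjoin_simple_self Fq α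
      set d := Module.finrank Fq L with hddef
      have hd1 : 1 ≤ d := Module.finrank_pos
      have hdlt : d < h := by
        have hlt : Subalgebra.toSubmodule L.toSubalgebra < ⊤ := by
          rw [lt_top_iff_ne_top]
          intro hc
          apply hgen
          have h1 : L.toSubalgebra = ⊤ := Algebra.toSubmodule_eq_top.1 hc
          apply IntermediateField.toSubalgebra_injective
          rw [h1, IntermediateField.top_toSubalgebra]
        have h2 := Submodule.finrank_lt (K := Fq) (V := K) hlt.ne
        rwa [Subalgebra.finrank_toSubmodule, IntermediateField.finrank_eq_finrank_subalgebra,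
          hrank] at h2
      have : Fintype L := Fintype.ofFinite L
      have hcardL : Fintype.card L = q ^ d := Module.card_eq_pow_finrank (K := Fq)
      have hαpow : α ^ (q ^ d) = α := by
        have hp := FiniteField.pow_card (⟨α, hmem⟩ : L)
        rw [hcardL] at hp
        have hp2 := congrArg (Subtype.val) hp
        push_cast at hp2
        simpa using hp2
      have hg0 : g.eval α = 0 := by
        rw [hgdef, eval_prod]
        apply Finset.prod_eq_zero (i := d - 1) (by simp; omega)
        have hd : d - 1 + 1 = d := by omega
        rw [hd]
        simp [hαpow]
      rw [hg0, mul_zero]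
  -- degree bounds
  have hdegf : f.natDegree ≤ (h*k-1) + q * (h*k-1) := by
    rw [hfdef]
    refine (natDegree_sum_le _ _).trans ?_
    rw [Finset.fold_max_le]
    refine ⟨by positivity, fun i _ => ?_⟩
    refine (natDegree_sum_le _ _).trans ?_
    rw [Finset.fold_max_le]
    refine ⟨by positivity, fun j _ => ?_⟩
    refine (natDegree_monomial_le _).trans ?_
    have h1 : (i:ℕ) ≤ h*k - 1 := by omega
    have h2 : (j:ℕ) ≤ h*k - 1 := by omega
    gcongr
  have hdegg : g.natDegree ≤ ∑ d ∈ Finset.range (h-1), q ^ (d+1) := by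
    rw [hgdef]
    refine (natDegree_prod_le _ _).trans ?_
    apply Finset.sum_le_sum
    intro d _
    refine (natDegree_sub_le _ _).trans ?_
    simp only [natDegree_X_pow, natDegree_X]
    exact max_le le_rfl (Nat.one_le_pow _ _ hqpos)
  -- f * g = 0
  have hfg : f * g = 0 := by
    apply Polynomial.eq_zero_of_natDegree_lt_card_of_eval_eq_zero (f * g)
      (Function.injective_id) (fun α => hroot α)
    calc (f * g).natDegree ≤ f.natDegree + g.natDegree := natDegree_mul_le
    _ ≤ ((h*k-1) + q * (h*k-1)) + ∑ d ∈ Finset.range (h-1), q ^ (d+1) := by gcongr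
    _ < q ^ h := numeric_ineq q (h*k) h hq3 hh hq hn1
    _ = Fintype.card K := hcardK.symm
  have hgne : g ≠ 0 := by
    rw [hgdef]
    apply Finset.prod_ne_zero_iff.2
    intro d _ hc
    have h2 : 2 ≤ q ^ (d+1) :=
      le_trans (by omega) (Nat.le_self_pow (by omega) q)
    have h1 : ((X:K[X]) ^ (q ^ (d+1)) - X).coeff (q^(d+1)) = 1 := by
      rw [coeff_sub, coeff_X_pow, if_pos rfl, Polynomial.coeff_X, if_neg (by omega), sub_zero]
    rw [hc, coeff_zero] at h1
    exact one_ne_zero h1.symm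
  have hf0 : f = 0 := by
    rcases mul_eq_zero.1 hfg with h' | h'
    · exact h'
    · exact absurd h' hgne
  intro i j
  rw [← hcoeff i j, hf0, coeff_zero]
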